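/- Let k be a positive integer and let h be a holomorphic function on the upper half-plane H satisfying h(τ) = h(σ) − τ^{−k} h(σ/τ) for all τ, σ ∈ H with σ/τ ∈ H. Then there exists a complex constant a such that h(τ) = a·τ^{−k} − a for all τ ∈ H. -/

import Mathlib

open Complex Filter Topology

/-- The open upper half-plane as a subset of `ℂ`. -/
def UHP : Set ℂ := {z : ℂ | 0 < z.im}

/-- `qexp τ = e^{2πiτ}`. -/
noncomputable def qexp (τ : ℂ) : ℂ := Complex.exp (2 * Real.pi * Complex.I * τ)

/-- Elliptic zeta values `Z_k(τ,σ)`. -/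
noncomputable def ellipticZeta (k : ℕ) (τ σ : ℂ) : ℂ :=
  -((2 * (Real.pi : ℂ) * Complex.I) ^ k / (Nat.factorial (k - 1) : ℂ)) *
    ∑' j : ℕ+, (j : ℂ) ^ (k - 1) *
      (qexp τ ^ (j : ℕ) - (-1 : ℂ) ^ k * qexp σ ^ (j : ℕ)) /
      ((1 - qexp τ ^ (j : ℕ)) * (1 - qexp σ ^ (j : ℕ)))

/-- `D_k(q)`: the normalized generating function of sums of `(k-1)`-st powers of divisors. -/
noncomputable def Dk (k : ℕ) (q : ℂ) : ℂ :=
  ((-2 * (Real.pi : ℂ) * Complex.I) ^ k / (Nat.factorial (k - 1) : ℂ)) *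
    ∑' n : ℕ+, (∑ d ∈ Nat.divisors (n : ℕ), (d : ℂ) ^ (k - 1)) * q ^ (n : ℕ)

/-- Ruijsenaars's elliptic gamma function. -/
noncomputable def ellipticGamma (z τ σ : ℂ) : ℂ :=
  ∏' p : ℕ × ℕ,
    (1 - qexp τ ^ (p.1 + 1) * qexp σ ^ (p.2 + 1) * Complex.exp (-(2 * Real.pi * Complex.I) * z)) /
    (1 - qexp τ ^ p.1 * qexp σ ^ p.2 * Complex.exp (2 * Real.pi * Complex.I * z))

/-- The modified theta function `θ₀(z,τ)`. -/
noncomputable def theta0 (z τ : ℂ) : ℂ :=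
  ∏' j : ℕ, (1 - qexp τ ^ (j + 1) * Complex.exp (-(2 * Real.pi * Complex.I) * z)) *
            (1 - qexp τ ^ j * Complex.exp (2 * Real.pi * Complex.I * z))

/-- A modular form of weight `k` for `SL(2,ℤ)`: a holomorphic function on the
upper half-plane transforming with weight `k` under `SL(2,ℤ)` and bounded as `Im τ → ∞`. -/
def IsModularForm (k : ℕ) (G : ℂ → ℂ) : Prop :=
  DifferentiableOn ℂ G UHP ∧
  (∀ A : Matrix.SpecialLinearGroup (Fin 2) ℤ, ∀ τ ∈ UHP,
      G (((A 0 0 : ℤ) * τ + (A 0 1 : ℤ)) / ((A 1 0 : ℤ) * τ + (A 1 1 : ℤ))) =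
        ((A 1 0 : ℤ) * τ + (A 1 1 : ℤ)) ^ k * G τ) ∧
  (∃ C : ℝ, ∀ τ ∈ UHP, 1 ≤ τ.im → ‖G τ‖ ≤ C)

/-- All factors in the defining double product of the elliptic gamma function are nonzero. -/
def EGFactorsNeZero (z τ σ : ℂ) : Prop :=
  ∀ j ℓ : ℕ,
    (1 - qexp τ ^ (j + 1) * qexp σ ^ (ℓ + 1) * Complex.exp (-(2 * Real.pi * Complex.I) * z)) ≠ 0 ∧
    (1 - qexp τ ^ j * qexp σ ^ ℓ * Complex.exp (2 * Real.pi * Complex.I * z)) ≠ 0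

/-- a holomorphic function on `H` with `h(τ) = h(σ) - τ^{-k} h(σ/τ)`
is of the form `h(τ) = a τ^{-k} - a`. -/
theorem cocycle_functional_equation_solution
    (k : ℕ) (hk : 0 < k) (h : ℂ → ℂ) (hol : DifferentiableOn ℂ h UHP)
    (hfe : ∀ τ ∈ UHP, ∀ σ ∈ UHP, σ / τ ∈ UHP →
      h τ = h σ - τ ^ (-(k : ℤ)) * h (σ / τ)) :
    ∃ a : ℂ, ∀ τ ∈ UHP, h τ = a * τ ^ (-(k : ℤ)) - a := by
  -- a point z with ‖z‖ > 1 satisfies 1 - z^{-k} ≠ 0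
  have hnz : ∀ z : ℂ, 1 < ‖z‖ → (1 : ℂ) - z ^ (-(k : ℤ)) ≠ 0 := by
    intro z hz
    have h1 : ‖z ^ (-(k : ℤ))‖ < 1 := by
      rw [norm_zpow, zpow_neg, zpow_natCast]
      have : (1:ℝ) < ‖z‖ ^ k := one_lt_pow₀ hz hk.ne'
      exact inv_lt_one_of_one_lt₀ this
    intro heq
    have : z ^ (-(k : ℤ)) = 1 := by linear_combination -heq
    rw [this, norm_one] at h1
    exact lt_irrefl 1 h1
  -- key symmetric relation
  have key : ∀ τ ∈ UHP, ∀ z ∈ UHP, τ * z ∈ UHP →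
      h τ * (1 - z ^ (-(k : ℤ))) = h z * (1 - τ ^ (-(k : ℤ))) := by
    intro τ hτ z hz hτz
    have hτ0 : τ ≠ 0 := fun h0 => by simp [UHP, h0] at hτ
    have hz0 : z ≠ 0 := fun h0 => by simp [UHP, h0] at hz
    have e1 := hfe τ hτ (τ * z) hτz (by rw [mul_div_cancel_left₀ _ hτ0]; exact hz)
    rw [mul_div_cancel_left₀ _ hτ0] at e1
    have hdiv : τ * z / z = τ := mul_div_cancel_right₀ τ hz0
    have e2 := hfe z hz (τ * z) hτz (by rw [hdiv]; exact hτ)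
    rw [hdiv] at e2
    linear_combination e1 - e2
  have h2I : (2 * I : ℂ) ∈ UHP := by simp [UHP]
  have h2In : (1:ℝ) < ‖(2 * I : ℂ)‖ := by
    simp [norm_mul]
  refine ⟨- h (2 * I) / (1 - (2 * I) ^ (-(k : ℤ))), fun τ hτ => ?_⟩
  set v : ℝ := τ.im / (2 * (|τ.re| + 1)) with hv
  have hτim : 0 < τ.im := hτ
  have hden : (0:ℝ) < 2 * (|τ.re| + 1) := by positivity
  have hv0 : 0 < v := div_pos hτim hden
  set w : ℂ := 1 + I * (v : ℝ) with hw
  have hwre : w.re = 1 := by simp [hw]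
  have hwim : w.im = v := by simp [hw]
  have hwH : w ∈ UHP := by simpa [UHP, hwim] using hv0
  have hτwH : τ * w ∈ UHP := by
    show 0 < (τ * w).im
    rw [Complex.mul_im, hwre, hwim]
    have hxv : |τ.re * v| ≤ τ.im / 2 := by
      rw [abs_mul, abs_of_pos hv0, hv, div_eq_mul_inv τ.im, ← mul_assoc]
      rw [mul_comm |τ.re| τ.im, mul_assoc]
      have h1 : |τ.re| * (2 * (|τ.re| + 1))⁻¹ ≤ 2⁻¹ := by
        rw [mul_inv]
        have : |τ.re| * (|τ.re| + 1)⁻¹ ≤ 1 := by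
          rw [mul_inv_le_iff₀ (by positivity)]
          linarith [abs_nonneg τ.re]
        nlinarith [inv_nonneg.mpr (le_of_lt (show (0:ℝ) < 2 by norm_num)), this]
      calc τ.im * (|τ.re| * (2 * (|τ.re| + 1))⁻¹) ≤ τ.im * 2⁻¹ := by
              exact mul_le_mul_of_nonneg_left h1 hτim.le
        _ = τ.im / 2 := by ring
    nlinarith [neg_abs_le (τ.re * v), hτim]
  have h2IwH : (2 * I) * w ∈ UHP := by
    show 0 < ((2 * I) * w).im
    rw [Complex.mul_im]
    simp [hwre, hwim]
  have hwn : (1:ℝ) < ‖w‖ := by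
    have h2 : (1:ℝ) < ‖w‖ ^ 2 := by
      rw [Complex.sq_norm, Complex.normSq_apply, hwre, hwim]
      nlinarith
    nlinarith [norm_nonneg w]
  have k1 := key τ hτ w hwH hτwH
  have k2 := key (2 * I) h2I w hwH h2IwH
  have hwnz := hnz w hwn
  have h2Inz := hnz (2 * I) h2In
  -- h τ * (1 - w^{-k}) * (1 - τ₀^{-k}) = h w * (1 - τ^{-k}) * (1 - τ₀^{-k})
  --                                    = h τ₀ * (1 - w^{-k}) * (1 - τ^{-k})
  have main : h τ * (1 - (2*I) ^ (-(k : ℤ))) = h (2*I) * (1 - τ ^ (-(k : ℤ))) := by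
    apply mul_right_cancel₀ hwnz
    calc h τ * (1 - (2*I) ^ (-(k:ℤ))) * (1 - w ^ (-(k:ℤ)))
        = h τ * (1 - w ^ (-(k:ℤ))) * (1 - (2*I) ^ (-(k:ℤ))) := by ring
      _ = h w * (1 - τ ^ (-(k:ℤ))) * (1 - (2*I) ^ (-(k:ℤ))) := by rw [k1]
      _ = h w * (1 - (2*I) ^ (-(k:ℤ))) * (1 - τ ^ (-(k:ℤ))) := by ring
      _ = h (2*I) * (1 - w ^ (-(k:ℤ))) * (1 - τ ^ (-(k:ℤ))) := by rw [k2]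
      _ = h (2*I) * (1 - τ ^ (-(k:ℤ))) * (1 - w ^ (-(k:ℤ))) := by ring
  rw [div_mul_eq_mul_div, div_sub_div_same, eq_div_iff h2Inz]
  linear_combination main
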